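/- arXiv:2407.12670 — 3 statements merged into one kernel-verified Lean document; each statement's English description precedes it below -/
import Mathlib

section
/- Let Q ∈ ℂ^{m×n} (n < m) have orthonormal columns, z ∈ ℂ^m, u = QQ*z ≠ 0, v = (I − QQ*)z ≠ 0. Then both u and v lie in the range of QQ* + zz*. In particular, (QQ* + zz*)(u/‖u‖² − v/‖v‖²) = u/‖u‖². -/
open Matrix

lemma vecMulVec_mulVec' {m : ℕ} (a b x : Fin m → ℂ) :
    vecMulVec a b *ᵥ x = (b ⬝ᵥ x) • a := by
  funext i
  simp [vecMulVec, mulVec, dotProduct, Finset.mul_sum, mul_comm, mul_assoc, mul_left_comm]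

lemma norm_sum_ne {m : ℕ} (u : Fin m → ℂ) (hu0 : u ≠ 0) :
    ((∑ i, ‖u i‖ ^ 2 : ℝ) : ℂ) ≠ 0 := by
  have h : (∑ i, ‖u i‖ ^ 2 : ℝ) ≠ 0 := by
    intro h
    apply hu0
    funext i
    have := (Finset.sum_eq_zero_iff_of_nonneg (fun i _ => by positivity)).mp h i (Finset.mem_univ i)
    simpa [pow_eq_zero_iff] using this
  exact_mod_cast h

lemma star_dot_self {m : ℕ} (u : Fin m → ℂ) :
    star u ⬝ᵥ u = ((∑ i, ‖u i‖ ^ 2 : ℝ) : ℂ) := by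
  rw [dotProduct]
  push_cast
  refine Finset.sum_congr rfl fun i _ => ?_
  rw [Pi.star_apply, Complex.star_def, mul_comm, Complex.mul_conj, Complex.normSq_eq_norm_sq]
  push_cast
  rfl

/-- both `u` and `v` lie in the range of `Q Qᴴ + z zᴴ`;
in particular `(QQᴴ + zzᴴ)(u/‖u‖² − v/‖v‖²) = u/‖u‖²`. -/
theorem stmt5 {m n : ℕ} (hmn : n < m) (Q : Matrix (Fin m) (Fin n) ℂ)
    (hQ : Qᴴ * Q = 1) (z u v : Fin m → ℂ)
    (hu : u = (Q * Qᴴ) *ᵥ z) (hv : v = z - u)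
    (hu0 : u ≠ 0) (hv0 : v ≠ 0) :
    (∃ x : Fin m → ℂ, (Q * Qᴴ + vecMulVec z (star z)) *ᵥ x = u) ∧
    (∃ x : Fin m → ℂ, (Q * Qᴴ + vecMulVec z (star z)) *ᵥ x = v) ∧
    (Q * Qᴴ + vecMulVec z (star z)) *ᵥ
        ((((∑ i, ‖u i‖ ^ 2)⁻¹ : ℝ) : ℂ) • u - (((∑ i, ‖v i‖ ^ 2)⁻¹ : ℝ) : ℂ) • v)
      = (((∑ i, ‖u i‖ ^ 2)⁻¹ : ℝ) : ℂ) • u := by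
  set P := Q * Qᴴ with hP
  set α : ℂ := ((∑ i, ‖u i‖ ^ 2 : ℝ) : ℂ) with hα
  set β : ℂ := ((∑ i, ‖v i‖ ^ 2 : ℝ) : ℂ) with hβ
  have hαne : α ≠ 0 := norm_sum_ne u hu0
  have hβne : β ≠ 0 := norm_sum_ne v hv0
  have hcastu : (((∑ i, ‖u i‖ ^ 2)⁻¹ : ℝ) : ℂ) = α⁻¹ := by rw [hα]; push_cast; rfl
  have hcastv : (((∑ i, ‖v i‖ ^ 2)⁻¹ : ℝ) : ℂ) = β⁻¹ := by rw [hβ]; push_cast; rfl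
  have hPH : Pᴴ = P := by
    rw [hP, conjTranspose_mul, conjTranspose_conjTranspose]
  have hP2 : P * P = P := by
    rw [hP, Matrix.mul_assoc, ← Matrix.mul_assoc Qᴴ, hQ, Matrix.one_mul]
  have hPu : P *ᵥ u = u := by
    rw [hu, mulVec_mulVec, hP2]
  have hPv : P *ᵥ v = 0 := by
    rw [hv, mulVec_sub, hPu, hu, sub_self]
  have hz : z = u + v := by rw [hv]; ring_nf
  -- inner products
  have hvu : star v ⬝ᵥ u = 0 := by
    rw [← hPu, dotProduct_mulVec, ← hPH, ← star_mulVec, hPv, star_zero, zero_dotProduct]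
  have huv : star u ⬝ᵥ v = 0 := by
    have h1 : star u = star u ᵥ* P := by
      conv_lhs => rw [← hPu]
      rw [star_mulVec, hPH]
    rw [h1, ← dotProduct_mulVec, hPv, dotProduct_zero]
  have hzu : star z ⬝ᵥ u = α := by
    rw [hz, star_add, add_dotProduct, star_dot_self, hvu, add_zero]
  have hzv : star z ⬝ᵥ v = β := by
    rw [hz, star_add, add_dotProduct, huv, zero_add, star_dot_self]
  have hA : ∀ x, (P + vecMulVec z (star z)) *ᵥ x = P *ᵥ x + (star z ⬝ᵥ x) • z := by
    intro x
    rw [add_mulVec, vecMulVec_mulVec']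
  have key : (P + vecMulVec z (star z)) *ᵥ (α⁻¹ • u - β⁻¹ • v) = α⁻¹ • u := by
    rw [hA, mulVec_sub, mulVec_smul, mulVec_smul, hPu, hPv, smul_zero, sub_zero,
        dotProduct_sub, dotProduct_smul, dotProduct_smul, hzu, hzv, smul_eq_mul, smul_eq_mul,
        inv_mul_cancel₀ hαne, inv_mul_cancel₀ hβne, sub_self, zero_smul, add_zero]
  refine ⟨⟨α • (α⁻¹ • u - β⁻¹ • v), ?_⟩, ?_, ?_⟩
  · rw [mulVec_smul, key, smul_smul, mul_inv_cancel₀ hαne, one_smul]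
  · -- A (β⁻¹ • v) = z, so v = z - u is in the range
    have hAz : (P + vecMulVec z (star z)) *ᵥ (β⁻¹ • v) = z := by
      rw [hA, mulVec_smul, hPv, smul_zero, zero_add, dotProduct_smul, hzv, smul_eq_mul,
          inv_mul_cancel₀ hβne, one_smul]
    refine ⟨β⁻¹ • v - α • (α⁻¹ • u - β⁻¹ • v), ?_⟩
    rw [mulVec_sub, hAz, mulVec_smul, key, smul_smul, mul_inv_cancel₀ hαne, one_smul, ← hv]
  · rw [hcastu, hcastv, key]
end

section
/- Let Q ∈ ℂ^{m×n} (n < m) have orthonormal columns, z ∈ ℂ^m with u = QQ*z ≠ 0 and v = (I−QQ*)z ≠ 0, and ν = ‖z‖. Then the largest singular value of the matrix [Q z] equals √((1 + ν² + √(1+ν⁴+2ν²−4‖v‖²))/2) and the smallest singular value equals √((1 + ν² − √(1+ν⁴+2ν²−4‖v‖²))/2); hence the spectral condition number κ₂([Q z]) equals the square root of the ratio of these two quantities. -/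
set_option maxHeartbeats 1000000

open Matrix

/-- The matrix `[Q z]`: `Q` with the column `z` appended. -/
def appendCol {m n : ℕ} (Q : Matrix (Fin m) (Fin n) ℂ) (z : Fin m → ℂ) :
    Matrix (Fin m) (Fin (n + 1)) ℂ :=
  Matrix.of fun i j => Fin.lastCases (z i) (fun k => Q i k) j

lemma dot_self_eq_sum {k : ℕ} (w : Fin k → ℂ) :
    star w ⬝ᵥ w = ((∑ i, ‖w i‖ ^ 2 : ℝ) : ℂ) := by
  simp only [dotProduct, Pi.star_apply]
  push_cast
  congr 1; ext i
  rw [Complex.star_def, ← Complex.normSq_eq_conj_mul_self, ← Complex.sq_norm]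
  push_cast; ring

lemma sum_normSq_pos {k : ℕ} (w : Fin k → ℂ) (h : w ≠ 0) : 0 < ∑ i, ‖w i‖ ^ 2 := by
  have h0 : 0 ≤ ∑ i, ‖w i‖ ^ 2 := Finset.sum_nonneg fun i _ => sq_nonneg _
  rcases h0.lt_or_eq with h' | h'
  · exact h'
  · exact absurd (funext fun i => by
      simpa using (Finset.sum_eq_zero_iff_of_nonneg
        (fun i _ => sq_nonneg ‖w i‖)).mp h'.symm i (Finset.mem_univ i)) h

lemma exists_eigenvalues_eq {N : ℕ} (H : Matrix (Fin N) (Fin N) ℂ) (hH : H.IsHermitian)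
    (μ : ℝ) (x : Fin N → ℂ) (hx : x ≠ 0) (hEq : H *ᵥ x = (μ : ℂ) • x) :
    ∃ i, hH.eigenvalues i = μ := by
  have hdet : ((μ : ℂ) • 1 - H).det = 0 := by
    rw [← Matrix.exists_mulVec_eq_zero_iff]
    exact ⟨x, hx, by
      rw [Matrix.sub_mulVec, Matrix.smul_mulVec, Matrix.one_mulVec, hEq, sub_self]⟩
  have hsp : (μ : ℂ) ∈ spectrum ℂ H := by
    rw [spectrum.mem_iff]
    intro hunit
    rw [Matrix.isUnit_iff_isUnit_det,
      show (algebraMap ℂ (Matrix (Fin N) (Fin N) ℂ)) (μ : ℂ) = (μ : ℂ) • 1 by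
        simp [Algebra.algebraMap_eq_smul_one], hdet] at hunit
    exact hunit.ne_zero rfl
  have : μ ∈ spectrum ℝ H := spectrum.of_algebraMap_mem ℂ hsp
  rwa [hH.spectrum_real_eq_range_eigenvalues, Set.mem_range] at this

/-- the extreme singular values of `[Q z]` (square roots of the
eigenvalues of `[Q z]ᴴ[Q z]`) are `√((1+ν² ± √(1+ν⁴+2ν²−4‖v‖²))/2)`, and the
spectral condition number is the square root of the ratio of these quantities. -/
theorem stmt10 {m n : ℕ} (hmn : n < m) (Q : Matrix (Fin m) (Fin n) ℂ)
    (hQ : Qᴴ * Q = 1) (z u v : Fin m → ℂ)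
    (hu : u = (Q * Qᴴ) *ᵥ z) (hv : v = z - u)
    (hu0 : u ≠ 0) (hv0 : v ≠ 0)
    (ν : ℝ) (hν : ν = Real.sqrt (∑ i, ‖z i‖ ^ 2)) :
    (⨆ i, Real.sqrt ((isHermitian_conjTranspose_mul_self (appendCol Q z)).eigenvalues i))
        = Real.sqrt ((1 + ν ^ 2 + Real.sqrt (1 + ν ^ 4 + 2 * ν ^ 2 - 4 * ∑ i, ‖v i‖ ^ 2)) / 2) ∧
    (⨅ i, Real.sqrt ((isHermitian_conjTranspose_mul_self (appendCol Q z)).eigenvalues i))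
        = Real.sqrt ((1 + ν ^ 2 - Real.sqrt (1 + ν ^ 4 + 2 * ν ^ 2 - 4 * ∑ i, ‖v i‖ ^ 2)) / 2) ∧
    (⨆ i, Real.sqrt ((isHermitian_conjTranspose_mul_self (appendCol Q z)).eigenvalues i)) /
      (⨅ i, Real.sqrt ((isHermitian_conjTranspose_mul_self (appendCol Q z)).eigenvalues i))
        = Real.sqrt
            (((1 + ν ^ 2 + Real.sqrt (1 + ν ^ 4 + 2 * ν ^ 2 - 4 * ∑ i, ‖v i‖ ^ 2)) / 2) /
              ((1 + ν ^ 2 - Real.sqrt (1 + ν ^ 4 + 2 * ν ^ 2 - 4 * ∑ i, ‖v i‖ ^ 2)) / 2)) := by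
  classical
  set H : Matrix (Fin (n+1)) (Fin (n+1)) ℂ := (appendCol Q z)ᴴ * appendCol Q z with hHdef
  have hH : H.IsHermitian := isHermitian_conjTranspose_mul_self (appendCol Q z)
  set eig : Fin (n+1) → ℝ := (isHermitian_conjTranspose_mul_self (appendCol Q z)).eigenvalues
    with heig
  set c : Fin n → ℂ := Qᴴ *ᵥ z with hc
  set N : ℝ := ∑ i, ‖z i‖ ^ 2 with hNdef
  set P : ℝ := ∑ i, ‖v i‖ ^ 2 with hPdef
  set U : ℝ := ∑ i, ‖u i‖ ^ 2 with hUdef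
  -- basic scalar facts
  have hN0 : 0 ≤ N := Finset.sum_nonneg fun i _ => sq_nonneg _
  have hU0 : 0 < U := sum_normSq_pos u hu0
  have hP0 : 0 < P := sum_normSq_pos v hv0
  have hNν : ν ^ 2 = N := by rw [hν]; exact Real.sq_sqrt hN0
  have hsz : star z ⬝ᵥ z = (N : ℂ) := dot_self_eq_sum z
  have hsu : star u ⬝ᵥ u = (U : ℂ) := dot_self_eq_sum u
  have hsv : star v ⬝ᵥ v = (P : ℂ) := dot_self_eq_sum v
  have hQQH : (Q * Qᴴ)ᴴ = Q * Qᴴ := by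
    rw [Matrix.conjTranspose_mul, Matrix.conjTranspose_conjTranspose]
  have hQQ2 : (Q * Qᴴ) * (Q * Qᴴ) = Q * Qᴴ := by
    rw [Matrix.mul_assoc, ← Matrix.mul_assoc Qᴴ Q Qᴴ, hQ, Matrix.one_mul]
  have hstaru : star u = star z ᵥ* (Q * Qᴴ) := by rw [hu, Matrix.star_mulVec, hQQH]
  have hcz : star c ⬝ᵥ c = star z ⬝ᵥ u := by
    rw [hc, Matrix.star_mulVec, Matrix.dotProduct_mulVec, Matrix.vecMul_vecMul,
      Matrix.conjTranspose_conjTranspose, hu, Matrix.dotProduct_mulVec]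
  have huu : star u ⬝ᵥ u = star z ⬝ᵥ u := by
    conv_lhs => rw [hstaru, ← Matrix.dotProduct_mulVec]
    congr 1
    rw [hu, Matrix.mulVec_mulVec, hQQ2]
  have huz : star u ⬝ᵥ z = star z ⬝ᵥ u := by
    conv_lhs => rw [hstaru, ← Matrix.dotProduct_mulVec, ← hu]
  have hcu : star c ⬝ᵥ c = (U : ℂ) := by rw [hcz, ← huu, hsu]
  have hzu : star z ⬝ᵥ u = (U : ℂ) := by rw [← huu, hsu]
  have hNUP : N = U + P := by
    have hC : (P : ℂ) = (N : ℂ) - (U : ℂ) := by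
      rw [← hsv, hv]
      have he : star (z - u) ⬝ᵥ (z - u)
          = star z ⬝ᵥ z - star u ⬝ᵥ z - (star z ⬝ᵥ u - star u ⬝ᵥ u) := by
        simp only [star_sub, sub_dotProduct, dotProduct_sub]
      rw [he, hsz, huz, hzu, hsu]
      ring
    have : (P : ℝ) = N - U := by exact_mod_cast hC
    linarith
  -- the two candidate extreme eigenvalues
  set S : ℝ := 1 + N with hSdef
  set D : ℝ := S ^ 2 - 4 * P with hDdef
  have hD0 : 0 ≤ D := by rw [hDdef, hSdef]; nlinarith [sq_nonneg (1 - P), hU0.le, hP0.le]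
  set sD : ℝ := Real.sqrt D with hsDdef
  have hsD0 : 0 ≤ sD := Real.sqrt_nonneg D
  have hsD2 : sD ^ 2 = D := Real.sq_sqrt hD0
  set lp : ℝ := (S + sD) / 2 with hlp
  set lm : ℝ := (S - sD) / 2 with hlm
  have hS0 : 0 < S := by rw [hSdef]; linarith
  have hsDS : sD < S := by
    rw [hsDdef, show S = Real.sqrt (S ^ 2) by rw [Real.sqrt_sq hS0.le]]
    apply Real.sqrt_lt_sqrt hD0
    rw [hDdef]; nlinarith
  have hlm0 : 0 < lm := by rw [hlm]; linarith
  have hlmlp : lm ≤ lp := by rw [hlm, hlp]; linarith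
  have hlp0 : 0 < lp := lt_of_lt_of_le hlm0 hlmlp
  have hsum : lp + lm = S := by rw [hlp, hlm]; ring
  have hprod : lp * lm = P := by
    rw [hlp, hlm, div_mul_div_comm, show (S + sD) * (S - sD) = S ^ 2 - sD ^ 2 by ring, hsD2,
      hDdef]
    ring
  have hql : lp ^ 2 - S * lp + P = 0 := by linear_combination lp * hsum - hprod
  have hqm : lm ^ 2 - S * lm + P = 0 := by linear_combination lm * hsum - hprod
  have hq1 : (1 : ℝ) - S + P = -U := by rw [hSdef]; linarith
  have h1lm : lm < 1 := by nlinarith [hq1, hU0, hlmlp]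
  have h1lp : 1 < lp := by nlinarith [hq1, hU0, hlmlp]
  have hroots : ∀ μ : ℝ, μ ^ 2 - S * μ + P = 0 → μ = lm ∨ μ = lp := by
    intro μ h
    have : (μ - lm) * (μ - lp) = 0 := by linear_combination h - μ * hsum + hprod
    rcases mul_eq_zero.mp this with h' | h'
    · exact Or.inl (by linarith [sub_eq_zero.mp h'])
    · exact Or.inr (by linarith [sub_eq_zero.mp h'])
  -- entries of H
  have hHcc : ∀ j k : Fin n, H j.castSucc k.castSucc = (Qᴴ * Q) j k := by
    intro j k
    simp [hHdef, Matrix.mul_apply, appendCol, Matrix.conjTranspose_apply]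
  have hHcl : ∀ j : Fin n, H j.castSucc (Fin.last n) = c j := by
    intro j
    simp [hHdef, hc, Matrix.mul_apply, appendCol, Matrix.conjTranspose_apply, Matrix.mulVec,
      dotProduct]
  have hHlc : ∀ k : Fin n, H (Fin.last n) k.castSucc = star (c k) := by
    intro k
    simp [hHdef, hc, Matrix.mul_apply, appendCol, Matrix.conjTranspose_apply, Matrix.mulVec,
      dotProduct, mul_comm]
  have hHll : H (Fin.last n) (Fin.last n) = (N : ℂ) := by
    rw [← hsz]
    simp [hHdef, Matrix.mul_apply, appendCol, Matrix.conjTranspose_apply, dotProduct]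
  -- action of H on a vector, blockwise
  have hmul1 : ∀ (x : Fin (n+1) → ℂ) (j : Fin n),
      (H *ᵥ x) j.castSucc = x j.castSucc + c j * x (Fin.last n) := by
    intro x j
    rw [Matrix.mulVec, dotProduct, Fin.sum_univ_castSucc]
    rw [hHcl j]
    have : ∀ k : Fin n, H j.castSucc k.castSucc * x k.castSucc
        = (if j = k then 1 else 0) * x k.castSucc := by
      intro k; rw [hHcc j k, hQ, Matrix.one_apply]
    rw [Finset.sum_congr rfl fun k _ => this k]
    simp
  have hmul2 : ∀ (x : Fin (n+1) → ℂ),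
      (H *ᵥ x) (Fin.last n)
        = (∑ k, star (c k) * x k.castSucc) + (N : ℂ) * x (Fin.last n) := by
    intro x
    rw [Matrix.mulVec, dotProduct, Fin.sum_univ_castSucc, hHll]
    congr 1
    exact Finset.sum_congr rfl fun k _ => by rw [hHlc k]
  have hcu' : (∑ k, star (c k) * c k) = (U : ℂ) := by
    rw [← hcu]; rfl
  -- every eigenvalue is 1 or a root of the quadratic
  have key : ∀ (μ : ℝ) (x : Fin (n+1) → ℂ), x ≠ 0 → H *ᵥ x = (μ : ℂ) • x →
      μ = 1 ∨ μ ^ 2 - S * μ + P = 0 := by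
    intro μ x hx0 hEq
    by_cases hμ1 : μ = 1
    · exact Or.inl hμ1
    right
    have hμ1' : (μ : ℂ) - 1 ≠ 0 := sub_ne_zero.mpr (by exact_mod_cast hμ1)
    have hcomp : ∀ j : Fin n, x j.castSucc + c j * x (Fin.last n) = (μ : ℂ) * x j.castSucc := by
      intro j
      have := congrFun hEq j.castSucc
      rw [hmul1] at this
      simpa using this
    have hxj : ∀ j : Fin n, x j.castSucc = c j * x (Fin.last n) / ((μ : ℂ) - 1) := by
      intro j
      rw [eq_div_iff hμ1']
      linear_combination -hcomp j
    have ht : x (Fin.last n) ≠ 0 := by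
      intro ht0
      apply hx0
      funext i
      refine Fin.lastCases ht0 (fun j => ?_) i
      rw [hxj j, ht0, mul_zero, zero_div]
      rfl
    have hlast := congrFun hEq (Fin.last n)
    rw [hmul2] at hlast
    have hsum2 : (∑ k, star (c k) * x k.castSucc)
        = (U : ℂ) * (x (Fin.last n) / ((μ : ℂ) - 1)) := by
      calc (∑ k, star (c k) * x k.castSucc)
          = ∑ k, (star (c k) * c k) * (x (Fin.last n) / ((μ : ℂ) - 1)) :=
            Finset.sum_congr rfl fun k _ => by rw [hxj k]; ring
        _ = (U : ℂ) * (x (Fin.last n) / ((μ : ℂ) - 1)) := by rw [← Finset.sum_mul, hcu']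
    rw [hsum2] at hlast
    simp only [Pi.smul_apply, smul_eq_mul] at hlast
    have hpoly : ((μ : ℂ) ^ 2 - (1 + (N : ℂ)) * (μ : ℂ) + ((N : ℂ) - (U : ℂ)))
        * x (Fin.last n) = 0 := by
      rw [mul_div_assoc'] at hlast
      field_simp at hlast
      linear_combination -(x (Fin.last n)) * hlast
    have hCq : (μ : ℂ) ^ 2 - (1 + (N : ℂ)) * (μ : ℂ) + ((N : ℂ) - (U : ℂ)) = 0 :=
      (mul_eq_zero.mp hpoly).resolve_right ht
    have hR : μ ^ 2 - (1 + N) * μ + (N - U) = 0 := by exact_mod_cast hCq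
    rw [hSdef, show P = N - U from by linarith]
    linarith
  -- the two extreme roots are attained
  have hroot : ∀ μ : ℝ, μ ^ 2 - S * μ + P = 0 → ∃ i, eig i = μ := by
    intro μ hμq
    have hμ1 : μ ≠ 1 := by
      intro h1
      rw [h1] at hμq
      nlinarith [hq1]
    set x : Fin (n+1) → ℂ := fun i => Fin.lastCases ((μ : ℂ) - 1) (fun k => c k) i with hxdef
    have hxlast : x (Fin.last n) = (μ : ℂ) - 1 := by simp [hxdef]
    have hxcs : ∀ j : Fin n, x j.castSucc = c j := by intro j; simp [hxdef]
    have hx0 : x ≠ 0 := by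
      intro h
      have := congrFun h (Fin.last n)
      rw [hxlast] at this
      exact sub_ne_zero.mpr (by exact_mod_cast hμ1 : (μ : ℂ) ≠ 1) this
    have hμC : (μ : ℂ) ^ 2 - (1 + (N : ℂ)) * (μ : ℂ) + ((N : ℂ) - (U : ℂ)) = 0 := by
      have hR : μ ^ 2 - (1 + N) * μ + (N - U) = 0 := by
        rw [hSdef] at hμq
        rw [show N - U = P from by linarith]
        linarith
      exact_mod_cast hR
    have hEq : H *ᵥ x = (μ : ℂ) • x := by
      funext i
      refine Fin.lastCases ?_ (fun j => ?_) i
      · rw [hmul2, Pi.smul_apply, hxlast, smul_eq_mul]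
        rw [Finset.sum_congr rfl fun k _ => by rw [hxcs k], hcu']
        linear_combination -hμC
      · rw [hmul1, Pi.smul_apply, hxcs j, hxlast, smul_eq_mul]
        ring
    obtain ⟨i, hi⟩ := exists_eigenvalues_eq H hH μ x hx0 hEq
    exact ⟨i, by rw [heig]; exact hi⟩
  -- all eigenvalues lie between lm and lp
  have hbound : ∀ i, lm ≤ eig i ∧ eig i ≤ lp := by
    intro i
    have hEv := hH.mulVec_eigenvectorBasis i
    have hx0 : (⇑(hH.eigenvectorBasis i) : Fin (n+1) → ℂ) ≠ 0 := by
      intro h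
      exact hH.eigenvectorBasis.orthonormal.ne_zero i (by ext j; exact congrFun h j)
    have hEq : H *ᵥ ⇑(hH.eigenvectorBasis i) = ((hH.eigenvalues i : ℝ) : ℂ) • ⇑(hH.eigenvectorBasis i) := by
      rw [hEv]
      funext j
      simp [Complex.real_smul]
    have heq2 : eig i = hH.eigenvalues i := by rw [heig]
    rcases key (hH.eigenvalues i) _ hx0 hEq with h1 | hq
    · rw [heq2, h1]; exact ⟨h1lm.le, h1lp.le⟩
    · rcases hroots _ hq with h | h <;> rw [heq2, h]
      · exact ⟨le_refl _, hlmlp⟩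
      · exact ⟨hlmlp, le_refl _⟩
  obtain ⟨ip, hip⟩ := hroot lp hql
  obtain ⟨im, him⟩ := hroot lm hqm
  have hsup : (⨆ i, Real.sqrt (eig i)) = Real.sqrt lp := by
    apply le_antisymm
    · exact ciSup_le fun i => Real.sqrt_le_sqrt (hbound i).2
    · have := le_ciSup (f := fun i => Real.sqrt (eig i))
        (Set.Finite.bddAbove (Set.finite_range _)) ip
      rwa [hip] at this
  have hinf : (⨅ i, Real.sqrt (eig i)) = Real.sqrt lm := by
    apply le_antisymm
    · have := ciInf_le (f := fun i => Real.sqrt (eig i))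
        (Set.Finite.bddBelow (Set.finite_range _)) im
      rwa [him] at this
    · exact le_ciInf fun i => Real.sqrt_le_sqrt (hbound i).1
  have hDν : 1 + ν ^ 4 + 2 * ν ^ 2 - 4 * P = D := by
    rw [show ν ^ 4 = (ν ^ 2) ^ 2 from by ring, hNν, hDdef, hSdef]
    ring
  have hgp : (1 + ν ^ 2 + Real.sqrt (1 + ν ^ 4 + 2 * ν ^ 2 - 4 * P)) / 2 = lp := by
    rw [hDν, hNν, hlp, hSdef, hsDdef]
  have hgm : (1 + ν ^ 2 - Real.sqrt (1 + ν ^ 4 + 2 * ν ^ 2 - 4 * P)) / 2 = lm := by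
    rw [hDν, hNν, hlm, hSdef, hsDdef]
  refine ⟨?_, ?_, ?_⟩
  · rw [hgp]; exact hsup
  · rw [hgm]; exact hinf
  · rw [hgp, hgm, hsup, hinf, Real.sqrt_div hlp0.le]
end

section
/- For fixed η ∈ (0,1), the function ν ↦ K(ν, η) = (1 + ν² + √(1 + ν⁴ + 2ν² − 4η²ν²)) / (1 + ν² − √(1 + ν⁴ + 2ν² − 4η²ν²)) on (0, ∞) is strictly decreasing on (0,1), strictly increasing on (1,∞), and attains its global minimum at ν = 1. -/
noncomputable def stmt12f (η x : ℝ) : ℝ :=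
  (1 + x ^ 2 + Real.sqrt (1 + x ^ 4 + 2 * x ^ 2 - 4 * η ^ 2 * x ^ 2)) /
    (1 + x ^ 2 - Real.sqrt (1 + x ^ 4 + 2 * x ^ 2 - 4 * η ^ 2 * x ^ 2))

noncomputable def stmt12g (η t : ℝ) : ℝ := (t + Real.sqrt (t ^ 2 - η ^ 2)) ^ 2 / η ^ 2

lemma stmt12_tau_ge_one {x : ℝ} (hx : 0 < x) : 1 ≤ (1 + x ^ 2) / (2 * x) := by
  rw [le_div_iff₀ (by positivity)]; nlinarith [sq_nonneg (1 - x)]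

lemma stmt12_key (η : ℝ) (hη0 : 0 < η) (hη1 : η < 1) {x : ℝ} (hx : 0 < x) :
    stmt12f η x = stmt12g η ((1 + x ^ 2) / (2 * x)) := by
  set t := (1 + x ^ 2) / (2 * x) with ht
  have ht1 : 1 ≤ t := stmt12_tau_ge_one hx
  have hu : 0 ≤ t ^ 2 - η ^ 2 := by nlinarith
  have hA : 1 + x ^ 2 = 2 * x * t := by rw [ht]; field_simp
  have hD : 1 + x ^ 4 + 2 * x ^ 2 - 4 * η ^ 2 * x ^ 2 = (2 * x) ^ 2 * (t ^ 2 - η ^ 2) := by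
    have h' : (2 * x) ^ 2 * (t ^ 2 - η ^ 2) = (2 * x * t) ^ 2 - 4 * η ^ 2 * x ^ 2 := by ring
    rw [h', ← hA]; ring
  have hs : Real.sqrt (1 + x ^ 4 + 2 * x ^ 2 - 4 * η ^ 2 * x ^ 2)
      = 2 * x * Real.sqrt (t ^ 2 - η ^ 2) := by
    rw [hD, Real.sqrt_mul (by positivity), Real.sqrt_sq (by positivity)]
  have hst : Real.sqrt (t ^ 2 - η ^ 2) < t := by
    have h2 := Real.sqrt_lt_sqrt hu (show t ^ 2 - η ^ 2 < t ^ 2 by nlinarith)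
    rwa [Real.sqrt_sq (by linarith)] at h2
  have hsnn : 0 ≤ Real.sqrt (t ^ 2 - η ^ 2) := Real.sqrt_nonneg _
  have hsq : Real.sqrt (t ^ 2 - η ^ 2) ^ 2 = t ^ 2 - η ^ 2 := Real.sq_sqrt hu
  unfold stmt12f stmt12g
  rw [hs, hA,
    show 2 * x * t + 2 * x * Real.sqrt (t ^ 2 - η ^ 2)
      = 2 * x * (t + Real.sqrt (t ^ 2 - η ^ 2)) by ring,
    show 2 * x * t - 2 * x * Real.sqrt (t ^ 2 - η ^ 2)
      = 2 * x * (t - Real.sqrt (t ^ 2 - η ^ 2)) by ring,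
    mul_div_mul_left _ _ (show (2 : ℝ) * x ≠ 0 by positivity),
    div_eq_div_iff (by linarith) (by positivity)]
  nlinarith [hsq]

lemma stmt12g_lt (η : ℝ) (hη0 : 0 < η) (hη1 : η < 1) {t1 t2 : ℝ}
    (h1 : 1 ≤ t1) (h12 : t1 < t2) : stmt12g η t1 < stmt12g η t2 := by
  have hu1 : 0 ≤ t1 ^ 2 - η ^ 2 := by nlinarith
  have hle : Real.sqrt (t1 ^ 2 - η ^ 2) ≤ Real.sqrt (t2 ^ 2 - η ^ 2) :=
    Real.sqrt_le_sqrt (by nlinarith)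
  have hsum : t1 + Real.sqrt (t1 ^ 2 - η ^ 2) < t2 + Real.sqrt (t2 ^ 2 - η ^ 2) := by
    linarith
  have hnn : 0 ≤ t1 + Real.sqrt (t1 ^ 2 - η ^ 2) := by
    have := Real.sqrt_nonneg (t1 ^ 2 - η ^ 2); linarith
  unfold stmt12g
  rw [div_lt_div_iff₀ (by positivity) (by positivity)]
  exact mul_lt_mul_of_pos_right (pow_lt_pow_left₀ hsum hnn two_ne_zero) (by positivity)

/-- for fixed `η ∈ (0,1)`, the squared condition number
`K(·,η)` is strictly decreasing on `(0,1)`, strictly increasing on `(1,∞)`,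
and attains its global minimum over `(0,∞)` at `ν = 1`. -/
theorem stmt12 (η : ℝ) (hη0 : 0 < η) (hη1 : η < 1) :
    StrictAntiOn
      (fun x : ℝ =>
        (1 + x ^ 2 + Real.sqrt (1 + x ^ 4 + 2 * x ^ 2 - 4 * η ^ 2 * x ^ 2)) /
          (1 + x ^ 2 - Real.sqrt (1 + x ^ 4 + 2 * x ^ 2 - 4 * η ^ 2 * x ^ 2)))
      (Set.Ioo 0 1) ∧
    StrictMonoOn
      (fun x : ℝ =>
        (1 + x ^ 2 + Real.sqrt (1 + x ^ 4 + 2 * x ^ 2 - 4 * η ^ 2 * x ^ 2)) /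
          (1 + x ^ 2 - Real.sqrt (1 + x ^ 4 + 2 * x ^ 2 - 4 * η ^ 2 * x ^ 2)))
      (Set.Ioi 1) ∧
    (∀ x : ℝ, 0 < x →
      (1 + (1 : ℝ) ^ 2 + Real.sqrt (1 + 1 ^ 4 + 2 * 1 ^ 2 - 4 * η ^ 2 * 1 ^ 2)) /
          (1 + (1 : ℝ) ^ 2 - Real.sqrt (1 + 1 ^ 4 + 2 * 1 ^ 2 - 4 * η ^ 2 * 1 ^ 2)) ≤
        (1 + x ^ 2 + Real.sqrt (1 + x ^ 4 + 2 * x ^ 2 - 4 * η ^ 2 * x ^ 2)) /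
          (1 + x ^ 2 - Real.sqrt (1 + x ^ 4 + 2 * x ^ 2 - 4 * η ^ 2 * x ^ 2))) := by
  refine ⟨?_, ?_, ?_⟩
  · intro x hx y hy hxy
    obtain ⟨hx0, hx1⟩ := hx
    obtain ⟨hy0, hy1⟩ := hy
    show stmt12f η y < stmt12f η x
    rw [stmt12_key η hη0 hη1 hy0, stmt12_key η hη0 hη1 hx0]
    apply stmt12g_lt η hη0 hη1 (stmt12_tau_ge_one hy0)
    rw [div_lt_div_iff₀ (by positivity) (by positivity)]
    nlinarith [mul_pos (sub_pos.mpr hxy) (show (0:ℝ) < 1 - x * y by nlinarith)]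
  · intro x hx y hy hxy
    simp only [Set.mem_Ioi] at hx hy
    have hx0 : (0:ℝ) < x := by linarith
    have hy0 : (0:ℝ) < y := by linarith
    show stmt12f η x < stmt12f η y
    rw [stmt12_key η hη0 hη1 hx0, stmt12_key η hη0 hη1 hy0]
    apply stmt12g_lt η hη0 hη1 (stmt12_tau_ge_one hx0)
    rw [div_lt_div_iff₀ (by positivity) (by positivity)]
    nlinarith [mul_pos (sub_pos.mpr hxy) (show (0:ℝ) < x * y - 1 by nlinarith)]
  · intro x hx
    show stmt12f η 1 ≤ stmt12f η x
    rw [stmt12_key η hη0 hη1 one_pos, stmt12_key η hη0 hη1 hx]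
    rcases eq_or_lt_of_le (stmt12_tau_ge_one hx) with h | h
    · rw [show ((1:ℝ) + 1 ^ 2) / (2 * 1) = 1 by norm_num, ← h]
    · rw [show ((1:ℝ) + 1 ^ 2) / (2 * 1) = 1 by norm_num]
      exact le_of_lt (stmt12g_lt η hη0 hη1 le_rfl h)
end
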